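/- arXiv:0704.2789 — 2 statements merged into one kernel-verified Lean document; each statement's English description precedes it below -/
import Mathlib

section
/- Let (ε_n)_{n≥0} be a sequence of nonnegative real numbers with ∑ ε_n = ∞. Then there exists a subset Λ ⊆ ℕ such that ∑_{n ∈ Λ} ε_n = ∞ and for all sufficiently large positive integers s there exists a positive integer m with Λ ∩ {n ∈ ℕ : n ≡ -s (mod m)} = ∅. -/
/-- From a nonsummable indicator over a set A, extract a finite block above N with sum ≥ 1. -/
lemma exists_block (ε : ℕ → ℝ) (hnonneg : ∀ n, 0 ≤ ε n) {A : Set ℕ}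
    (h : ¬ Summable (A.indicator ε)) (N : ℕ) :
    ∃ B : Finset ℕ, ↑B ⊆ A ∧ (∀ n ∈ B, N ≤ n) ∧ 1 ≤ ∑ n ∈ B, ε n := by
  classical
  set A' : Set ℕ := A ∩ {n | N ≤ n} with hA'
  have hsplit : A = A' ∪ (A ∩ {n | n < N}) := by
    ext n; by_cases hn : N ≤ n <;> simp [hA', hn, Nat.lt_of_not_le, Nat.not_le.mpr]
  have hdisj : Disjoint A' (A ∩ {n | n < N}) := by
    rw [Set.disjoint_left]; rintro n ⟨-, h1⟩ ⟨-, h2⟩; exact absurd h1 (by simpa using h2)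
  have hfin : ((A ∩ {n | n < N}) : Set ℕ).Finite :=
    (Set.finite_Iio N).subset (by intro n hn; exact hn.2)
  have hsum2 : Summable ((A ∩ {n | n < N}).indicator ε) := by
    apply summable_of_ne_finset_zero (s := hfin.toFinset)
    intro n hn
    rw [Set.Finite.mem_toFinset] at hn
    exact Set.indicator_of_notMem hn ε
  have h' : ¬ Summable (A'.indicator ε) := by
    intro hs
    apply h
    rw [hsplit, Set.indicator_union_of_disjoint hdisj]
    exact hs.add hsum2
  -- nonneg nonsummable: some finite partial sum ≥ 1
  have hnn : ∀ n, 0 ≤ A'.indicator ε n := fun n => Set.indicator_nonneg (fun x _ => hnonneg x) n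
  by_contra hcon
  push_neg at hcon
  apply h'
  apply summable_of_sum_range_le (c := 1) hnn
  intro n
  by_contra hlt
  push_neg at hlt
  set B := (Finset.range n).filter (· ∈ A') with hB
  refine absurd (hcon B ?_ ?_) (by
    push_neg
    have : ∑ m ∈ B, ε m = ∑ m ∈ Finset.range n, A'.indicator ε m := by
      rw [hB, Finset.sum_filter]
      apply Finset.sum_congr rfl
      intro m _
      by_cases hm : m ∈ A' <;> simp [Set.indicator_apply, hm]
    rw [this]; exact le_of_lt hlt)
  · intro m hm
    simp only [hB, Finset.coe_filter, Set.mem_setOf_eq] at hm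
    exact hm.2.1
  · intro m hm
    simp only [hB, Finset.mem_filter] at hm
    exact hm.2.2


lemma exists_subclass (ε : ℕ → ℝ) {M r : ℕ} (hM : 0 < M) (hr : r < M)
    (h : ¬ Summable (Set.indicator {n | n % M = r} ε)) (b : ℕ) :
    ∃ M' r', M ∣ M' ∧ M < M' ∧ b < M' ∧ r' < M' ∧ r' % M = r ∧
      ¬ Summable (Set.indicator {n | n % M' = r'} ε) := by
  classical
  set C := b + 2 with hC
  set M' := C * M with hM'
  have hMM' : M < M' := by
    have : 1 * M < C * M := (Nat.mul_lt_mul_right hM).mpr (by omega)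
    simpa using this
  have hbM' : b < M' := by
    have : C * 1 ≤ C * M := Nat.mul_le_mul_left C hM
    omega
  have hdvd : M ∣ M' := ⟨C, by rw [hM']; ring⟩
  -- pointwise decomposition
  have hpt : ∀ n, Set.indicator {n | n % M = r} ε n
      = ∑ t ∈ Finset.range C, Set.indicator {n | n % M' = r + t * M} ε n := by
    intro n
    by_cases hn : n % M = r
    · have hq : n % M' % M = r := by
        rw [Nat.mod_mod_of_dvd n hdvd, hn]
      set t0 := n % M' / M with ht0
      have hqlt : n % M' < M' := Nat.mod_lt n (by positivity)
      have hcomm : t0 * M = M * (n % M' / M) := by rw [ht0, Nat.mul_comm]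
      have ht0C : t0 < C := by
        rcases Nat.lt_or_ge t0 C with h'|h'
        · exact h'
        · exfalso
          have : C * M ≤ t0 * M := Nat.mul_le_mul_right M h'
          have h2 : t0 * M ≤ n % M' := by
            rw [ht0]; exact Nat.div_mul_le_self _ _
          omega
      have hkey : n % M' = r + t0 * M := by
        have := Nat.div_add_mod (n % M') M
        omega
      rw [Set.indicator_of_mem (show n ∈ {n | n % M = r} from hn)]
      rw [Finset.sum_eq_single t0]
      · rw [Set.indicator_of_mem (show n ∈ {n | n % M' = r + t0 * M} from hkey)]
      · intro t ht hne
        apply Set.indicator_of_notMem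
        intro hmem
        have hmem' : n % M' = r + t * M := hmem
        have : t * M = t0 * M := by omega
        exact hne (Nat.eq_of_mul_eq_mul_right hM this)
      · intro habs
        exact absurd ht0C (by simpa using habs)
    · rw [Set.indicator_of_notMem (show n ∉ {n | n % M = r} from hn)]
      symm
      apply Finset.sum_eq_zero
      intro t ht
      apply Set.indicator_of_notMem
      intro hmem
      apply hn
      have hmem' : n % M' = r + t * M := hmem
      have h1 : n % M' % M = (r + t * M) % M := by rw [hmem']
      rw [Nat.mod_mod_of_dvd n hdvd] at h1
      rw [h1]
      simp [Nat.add_mul_mod_self_right, Nat.mod_eq_of_lt hr]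
  -- some subclass must be nonsummable
  by_contra hcon
  push_neg at hcon
  apply h
  have hsm : Summable (fun n => ∑ t ∈ Finset.range C, Set.indicator {n | n % M' = r + t * M} ε n) := by
    apply summable_sum
    intro t ht
    have htM : (t + 1) * M ≤ C * M := Nat.mul_le_mul_right M (Finset.mem_range.mp ht)
    have hexp : (t + 1) * M = t * M + M := by ring
    exact hcon M' (r + t * M) hdvd hMM' hbM' (by omega)
      (by simp [Nat.add_mul_mod_self_right, Nat.mod_eq_of_lt hr])
  exact hsm.congr fun n => (hpt n).symm

open Set Finset

section Aux

/-- State of the recursive construction: a modulus, residue and lower bound. -/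
structure RState (ε : ℕ → ℝ) where
  M : ℕ
  r : ℕ
  b : ℕ
  hM : 0 < M
  hr : r < M
  hsum : ¬ Summable (Set.indicator {n | n % M = r} ε)

lemma step_ex (ε : ℕ → ℝ) (hnonneg : ∀ n, 0 ≤ ε n) (st : RState ε) :
    ∃ p : Finset ℕ × RState ε,
      (↑p.1 ⊆ {n | n % st.M = st.r}) ∧ (∀ n ∈ p.1, st.b ≤ n) ∧ (1 ≤ ∑ n ∈ p.1, ε n) ∧
      st.M ∣ p.2.M ∧ st.M < p.2.M ∧ p.2.r % st.M = st.r ∧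
      (∀ n ∈ p.1, n < p.2.M) ∧ (∀ n ∈ p.1, n < p.2.b) ∧ st.b ≤ p.2.b := by
  obtain ⟨B, hB1, hB2, hB3⟩ := exists_block ε hnonneg st.hsum st.b
  set b' := max st.b (B.sup id + 1) with hb'
  obtain ⟨M', r', h1, h2, h3, h4, h5, h6⟩ := exists_subclass ε st.hM st.hr st.hsum b'
  have hBlt : ∀ n ∈ B, n < b' := by
    intro n hn
    have : n ≤ B.sup id := Finset.le_sup (f := id) hn
    omega
  refine ⟨⟨B, ⟨M', r', b', lt_trans st.hM h2, h4, h6⟩⟩, hB1, hB2, hB3, h1, h2, h5,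
    fun n hn => lt_trans (hBlt n hn) h3, hBlt, le_max_left _ _⟩

noncomputable def nextp (ε : ℕ → ℝ) (hnonneg : ∀ n, 0 ≤ ε n) (st : RState ε) :
    Finset ℕ × RState ε :=
  Classical.choose (step_ex ε hnonneg st)

lemma nextp_spec (ε : ℕ → ℝ) (hnonneg : ∀ n, 0 ≤ ε n) (st : RState ε) :
    (↑(nextp ε hnonneg st).1 ⊆ {n | n % st.M = st.r}) ∧
      (∀ n ∈ (nextp ε hnonneg st).1, st.b ≤ n) ∧ (1 ≤ ∑ n ∈ (nextp ε hnonneg st).1, ε n) ∧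
      st.M ∣ (nextp ε hnonneg st).2.M ∧ st.M < (nextp ε hnonneg st).2.M ∧
      (nextp ε hnonneg st).2.r % st.M = st.r ∧
      (∀ n ∈ (nextp ε hnonneg st).1, n < (nextp ε hnonneg st).2.M) ∧
      (∀ n ∈ (nextp ε hnonneg st).1, n < (nextp ε hnonneg st).2.b) ∧
      st.b ≤ (nextp ε hnonneg st).2.b :=
  Classical.choose_spec (step_ex ε hnonneg st)

noncomputable def chain (ε : ℕ → ℝ) (hnonneg : ∀ n, 0 ≤ ε n) (hdiv : ¬ Summable ε) :
    ℕ → RState ε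
  | 0 => ⟨1, 0, 0, one_pos, one_pos, by
      have : {n : ℕ | n % 1 = 0} = Set.univ := by ext n; simp [Nat.mod_one]
      simpa [this] using hdiv⟩
  | k + 1 => (nextp ε hnonneg (chain ε hnonneg hdiv k)).2

end Aux


/-- From a divergent series of nonnegative reals one can extract a
subset `Λ ⊆ ℕ` retaining divergence, such that for all sufficiently large
positive integers `s` there is a positive integer `m` with
`Λ ∩ {n : n ≡ -s (mod m)} = ∅` (the R-set condition). -/
theorem stmt_0 (ε : ℕ → ℝ) (hnonneg : ∀ n, 0 ≤ ε n)
    (hdiv : ¬ Summable ε) :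
    ∃ Λ : Set ℕ,
      (¬ Summable (Λ.indicator ε)) ∧
      (∃ S : ℕ, ∀ s : ℕ, S ≤ s → 0 < s →
        ∃ m : ℕ, 0 < m ∧ ∀ n ∈ Λ, ¬ ((n : ℤ) ≡ -(s : ℤ) [ZMOD (m : ℤ)])) := by
  classical
  set st := chain ε hnonneg hdiv with hst
  set B : ℕ → Finset ℕ := fun k => (nextp ε hnonneg (st k)).1 with hBdef
  have hchain : ∀ k, st (k + 1) = (nextp ε hnonneg (st k)).2 := fun k => rfl
  have hspec := fun k => nextp_spec ε hnonneg (st k)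
  have hBsub : ∀ k, ↑(B k) ⊆ {n | n % (st k).M = (st k).r} := fun k => (hspec k).1
  have hBge : ∀ k, ∀ n ∈ B k, (st k).b ≤ n := fun k => (hspec k).2.1
  have hBsum : ∀ k, 1 ≤ ∑ n ∈ B k, ε n := fun k => (hspec k).2.2.1
  have hMdvd : ∀ k, (st k).M ∣ (st (k + 1)).M := fun k => by
    rw [hchain k]; exact (hspec k).2.2.2.1
  have hMlt : ∀ k, (st k).M < (st (k + 1)).M := fun k => by
    rw [hchain k]; exact (hspec k).2.2.2.2.1
  have hrcomp : ∀ k, (st (k + 1)).r % (st k).M = (st k).r := fun k => by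
    rw [hchain k]; exact (hspec k).2.2.2.2.2.1
  have hBltM : ∀ k, ∀ n ∈ B k, n < (st (k + 1)).M := fun k => by
    rw [hchain k]; exact (hspec k).2.2.2.2.2.2.1
  have hBltb : ∀ k, ∀ n ∈ B k, n < (st (k + 1)).b := fun k => by
    rw [hchain k]; exact (hspec k).2.2.2.2.2.2.2.1
  have hble : ∀ k, (st k).b ≤ (st (k + 1)).b := fun k => by
    rw [hchain k]; exact (hspec k).2.2.2.2.2.2.2.2
  have hMmono : StrictMono fun k => (st k).M := strictMono_nat_of_lt_succ hMlt
  have hbmono : Monotone fun k => (st k).b := monotone_nat_of_le_succ hble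
  -- compatibility along the chain
  have hcompat : ∀ j i, j ≤ i → (st j).M ∣ (st i).M ∧ (st i).r % (st j).M = (st j).r := by
    intro j i hji
    induction i with
    | zero =>
      have : j = 0 := Nat.le_zero.mp hji
      subst this
      exact ⟨dvd_refl _, Nat.mod_eq_of_lt (st 0).hr⟩
    | succ i ih =>
      rcases Nat.lt_or_ge j (i + 1) with h' | h'
      · have hji' : j ≤ i := Nat.lt_succ_iff.mp h'
        obtain ⟨hd, hres⟩ := ih hji'
        refine ⟨hd.trans (hMdvd i), ?_⟩
        rw [← Nat.mod_mod_of_dvd _ hd, hrcomp i, hres]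
      · have : j = i + 1 := le_antisymm hji h'
        subst this
        exact ⟨dvd_refl _, Nat.mod_eq_of_lt (st (i + 1)).hr⟩
  -- elements of earlier blocks are smaller than later moduli
  have hsmall : ∀ i j, i < j → ∀ n ∈ B i, n < (st j).M := by
    intro i j hij n hn
    exact lt_of_lt_of_le (hBltM i n hn) (hMmono.monotone hij)
  -- blocks are separated
  have hsep : ∀ i j, i < j → ∀ n ∈ B i, ∀ n' ∈ B j, n < n' := by
    intro i j hij n hn n' hn'
    calc n < (st (i + 1)).b := hBltb i n hn
      _ ≤ (st j).b := hbmono hij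
      _ ≤ n' := hBge j n' hn'
  set Λ : Set ℕ := ⋃ k, ↑(B k) with hΛ
  have hmemΛ : ∀ k, ∀ n ∈ B k, n ∈ Λ := by
    intro k n hn
    exact Set.mem_iUnion.mpr ⟨k, hn⟩
  refine ⟨Λ, ?_, ?_⟩
  · -- non-summability
    intro hsum
    have hnn : ∀ n, 0 ≤ Λ.indicator ε n := fun n => Set.indicator_nonneg (fun x _ => hnonneg x) n
    have key : ∀ K : ℕ, (K : ℝ) ≤ ∑' n, Λ.indicator ε n := by
      intro K
      set F := (Finset.range K).biUnion B with hF
      have hdisj : ∀ i ∈ Finset.range K, ∀ j ∈ Finset.range K, i ≠ j →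
          Disjoint (B i) (B j) := by
        intro i _ j _ hij
        rw [Finset.disjoint_left]
        intro n hni hnj
        rcases Nat.lt_or_ge i j with h' | h'
        · exact absurd rfl (hsep i j h' n hni n hnj).ne
        · have h'' : j < i := lt_of_le_of_ne h' (Ne.symm hij)
          exact absurd rfl (hsep j i h'' n hnj n hni).ne
      have hFsum : (K : ℝ) ≤ ∑ n ∈ F, Λ.indicator ε n := by
        rw [hF, Finset.sum_biUnion hdisj]
        have : ∀ k ∈ Finset.range K, 1 ≤ ∑ n ∈ B k, Λ.indicator ε n := by
          intro k _
          have : ∑ n ∈ B k, Λ.indicator ε n = ∑ n ∈ B k, ε n :=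
            Finset.sum_congr rfl fun n hn => Set.indicator_of_mem (hmemΛ k n hn) ε
          rw [this]; exact hBsum k
        calc (K : ℝ) = ∑ _k ∈ Finset.range K, (1 : ℝ) := by simp
          _ ≤ ∑ k ∈ Finset.range K, ∑ n ∈ B k, Λ.indicator ε n :=
            Finset.sum_le_sum this
      exact hFsum.trans (Summable.sum_le_tsum F (fun n _ => hnn n) hsum)
    obtain ⟨K, hK⟩ := exists_nat_gt (∑' n, Λ.indicator ε n)
    exact absurd (key K) (not_le.mpr hK)
  · -- residue avoidance
    set bad : ℕ → Prop := fun s => ∀ j, s < (st j).M → (st j).M ∣ s + (st j).r with hbad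
    have hbad_unique : ∀ s s', 0 < s → 0 < s' → bad s → bad s' → s = s' := by
      intro s s' hs hs' hb hb'
      by_contra hne
      have hub : ∃ j, s < (st j).M ∧ s' < (st j).M := by
        refine ⟨s + s' + 1, ?_, ?_⟩ <;>
        · have := hMmono.le_apply (x := s + s' + 1)
          omega
      obtain ⟨j, h1, h2⟩ := hub
      have d1 := hb j h1
      have d2 := hb' j h2
      have : (st j).M ∣ (s + (st j).r) + (s' + (st j).r) - 2 * min (s + (st j).r) (s' + (st j).r) := by
        rcases le_total (s + (st j).r) (s' + (st j).r) with h | h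
        · have : (s + (st j).r) + (s' + (st j).r) - 2 * min (s + (st j).r) (s' + (st j).r)
              = (s' + (st j).r) - (s + (st j).r) := by omega
          rw [this]; exact Nat.dvd_sub d2 d1
        · have : (s + (st j).r) + (s' + (st j).r) - 2 * min (s + (st j).r) (s' + (st j).r)
              = (s + (st j).r) - (s' + (st j).r) := by omega
          rw [this]; exact Nat.dvd_sub d1 d2
      have hlt : (s + (st j).r) + (s' + (st j).r) - 2 * min (s + (st j).r) (s' + (st j).r)
          < (st j).M := by omega
      have hpos : 0 < (s + (st j).r) + (s' + (st j).r)
          - 2 * min (s + (st j).r) (s' + (st j).r) := by omega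
      have := Nat.le_of_dvd hpos this
      omega
    set S : ℕ := if h : ∃ s, 0 < s ∧ bad s then Classical.choose h + 1 else 0 with hS
    refine ⟨S, ?_⟩
    intro s hSs hs
    have hnotbad : ¬ bad s := by
      intro hb
      have hex : ∃ s, 0 < s ∧ bad s := ⟨s, hs, hb⟩
      rw [dif_pos hex] at hS
      obtain ⟨h1, h2⟩ := Classical.choose_spec hex
      have := hbad_unique s (Classical.choose hex) hs h1 hb h2
      omega
    have hnotbad' : ∃ j, s < (st j).M ∧ ¬ (st j).M ∣ s + (st j).r := by
      by_contra hc
      push_neg at hc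
      exact hnotbad fun j hj => hc j hj
    obtain ⟨j, hjM, hjnd⟩ := hnotbad'
    refine ⟨2 * (st j).M, by have := (st j).hM; omega, ?_⟩
    intro n hn hmod
    -- translate the congruence into a divisibility
    have hdvdZ : ((2 * (st j).M : ℕ) : ℤ) ∣ ((n + s : ℕ) : ℤ) := by
      have := Int.ModEq.dvd hmod
      push_cast at this ⊢
      have h2 : ((2 : ℤ) * (st j).M) ∣ ((n : ℤ) + s) := by
        have := dvd_neg.mpr this
        simpa [neg_sub, sub_neg_eq_add, add_comm] using this
      convert h2 using 2
    have hdvd2 : 2 * (st j).M ∣ n + s := Int.ofNat_dvd.mp hdvdZ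
    obtain ⟨i, hni⟩ := Set.mem_iUnion.mp hn
    rcases Nat.lt_or_ge i j with hij | hij
    · -- small element: 0 < n + s < 2 M j
      have h1 : n < (st j).M := hsmall i j hij n hni
      have h2 := Nat.le_of_dvd (by omega) hdvd2
      omega
    · -- tail element: n ≡ r j mod M j
      have hdM : (st j).M ∣ (st i).M := (hcompat j i hij).1
      have hres : (st i).r % (st j).M = (st j).r := (hcompat j i hij).2
      have hnc : n % (st i).M = (st i).r := hBsub i hni
      have hnmod : n % (st j).M = (st j).r := by
        rw [← Nat.mod_mod_of_dvd n hdM, hnc, hres]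
      have hMd : (st j).M ∣ n + s := dvd_trans ⟨2, by ring⟩ hdvd2
      apply hjnd
      have h1 : n ≡ (st j).r [MOD (st j).M] := by
        unfold Nat.ModEq
        rw [hnmod, Nat.mod_eq_of_lt (st j).hr]
      have h2 : n + s ≡ (st j).r + s [MOD (st j).M] := h1.add_right s
      have h3 : (st j).M ∣ (st j).r + s :=
        (Nat.modEq_zero_iff_dvd).mp (h2.symm.trans (Nat.modEq_zero_iff_dvd.mpr hMd))
      simpa [Nat.add_comm] using h3
end

section
/- A rational function f whose Taylor spectrum {n : the n-th Taylor coefficient at 0 is nonzero} is contained in a set Λ ⊆ ℕ satisfying: for all sufficiently large s there exists m ≥ 1 with Λ ∩ {n ≡ -s (mod m)} = ∅, must be a polynomial. -/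
open Polynomial Finset

namespace Stmt6

noncomputable section
variable (c : ℕ → ℂ)

/-- `L c f n = ∑ⱼ fⱼ c(n+j)` -/
def L (f : ℂ[X]) (n : ℕ) : ℂ := f.sum fun j a => a * c (n + j)

lemma L_add (f g : ℂ[X]) (n : ℕ) : L c (f + g) n = L c f n + L c g n := by
  unfold L
  rw [Polynomial.sum_add_index] <;> intros <;> ring

lemma L_monomial (j : ℕ) (b : ℂ) (n : ℕ) : L c (monomial j b) n = b * c (n + j) := by
  unfold L
  rw [Polynomial.sum_monomial_index]
  ring

lemma L_zero (n : ℕ) : L c 0 n = 0 := Polynomial.sum_zero_index _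

lemma L_neg (f : ℂ[X]) (n : ℕ) : L c (-f) n = - L c f n := by
  have h := L_add c f (-f) n
  rw [add_neg_cancel, L_zero] at h
  linear_combination -h

lemma L_sub (f g : ℂ[X]) (n : ℕ) : L c (f - g) n = L c f n - L c g n := by
  rw [sub_eq_add_neg, L_add, L_neg, sub_eq_add_neg]

lemma L_monomial_mul (j : ℕ) (b : ℂ) (f : ℂ[X]) (n : ℕ) :
    L c (monomial j b * f) n = b * L c f (n + j) := by
  induction f using Polynomial.induction_on' with
  | add p q hp hq => rw [mul_add, L_add, L_add, hp, hq, mul_add]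
  | monomial i a =>
      rw [monomial_mul_monomial, L_monomial, L_monomial]
      rw [← add_assoc]
      ring

lemma L_dvd (R : ℂ[X]) (N1 : ℕ) (hrec : ∀ n, N1 ≤ n → L c R n = 0) (w : ℂ[X])
    (hw : R ∣ w) : ∀ n, N1 ≤ n → L c w n = 0 := by
  obtain ⟨u, rfl⟩ := hw
  induction u using Polynomial.induction_on' with
  | add p q hp hq =>
      intro n hn
      rw [mul_add, L_add, hp n hn, hq n hn, add_zero]
  | monomial i a =>
      intro n hn
      rw [mul_comm, L_monomial_mul, hrec (n + i) (le_trans hn (Nat.le_add_right _ _)), mul_zero]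

lemma L_comp (H : ℂ[X]) (m n : ℕ) :
    L c (H.comp (X ^ m)) n = H.sum fun j b => b * c (n + m * j) := by
  induction H using Polynomial.induction_on' with
  | add p q hp hq =>
      rw [add_comp, L_add, hp, hq, Polynomial.sum_add_index] <;> intros <;> ring
  | monomial i a =>
      rw [Polynomial.sum_monomial_index _ _ (by ring), ← C_mul_X_pow_eq_monomial, mul_comp,
        C_comp, pow_comp, X_comp, ← pow_mul, C_mul_X_pow_eq_monomial, L_monomial]


/-- Jet lemma: any `F` agrees with some polynomial in `X^m` to order `K` at `lam ≠ 0`. -/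
lemma jet (lam : ℂ) (hlam : lam ≠ 0) (m : ℕ) (hm : 0 < m) (F : ℂ[X]) :
    ∀ K : ℕ, ∃ ψ : ℂ[X], (X - C lam) ^ K ∣ F - ψ.comp (X ^ m) := by
  intro K
  induction K with
  | zero => exact ⟨0, by simp⟩
  | succ K ih =>
      obtain ⟨ψ₀, G, hG⟩ := ih
      set B : ℂ[X] := ∑ i ∈ range m, X ^ i * (C lam) ^ (m - 1 - i) with hB
      have hBmul : B * (X - C lam) = X ^ m - C (lam ^ m) := by
        rw [hB, geom_sum₂_mul, C_pow]
      have hBe : B.eval lam = (m : ℂ) * lam ^ (m - 1) := by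
        rw [hB]
        simp only [eval_finset_sum, eval_mul, eval_pow, eval_X, eval_C]
        rw [Finset.sum_congr rfl (fun i hi => ?_), Finset.sum_const, card_range, nsmul_eq_mul]
        rw [← pow_add]
        congr 1
        have := mem_range.1 hi
        omega
      have hBne : B.eval lam ≠ 0 := by
        rw [hBe]
        exact mul_ne_zero (Nat.cast_ne_zero.2 hm.ne') (pow_ne_zero _ hlam)
      set a : ℂ := G.eval lam / (B.eval lam) ^ K with ha
      refine ⟨ψ₀ + C a * (X - C (lam ^ m)) ^ K, ?_⟩
      have hcomp : (ψ₀ + C a * (X - C (lam ^ m)) ^ K).comp (X ^ m)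
          = ψ₀.comp (X ^ m) + C a * ((X:ℂ[X]) ^ m - C (lam ^ m)) ^ K := by
        rw [add_comp, mul_comp, C_comp, pow_comp, sub_comp, X_comp, C_comp]
      have key : F - (ψ₀ + C a * (X - C (lam ^ m)) ^ K).comp (X ^ m)
          = (X - C lam) ^ K * (G - C a * B ^ K) := by
        rw [hcomp, ← hBmul, mul_pow]
        linear_combination hG
      rw [key, pow_succ]
      apply mul_dvd_mul_left
      rw [dvd_iff_isRoot]
      show eval lam _ = 0
      rw [eval_sub, eval_mul, eval_C, eval_pow, ha]
      field_simp
      ring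

/-- Hand-rolled polynomial CRT at powers of distinct linear factors. -/
lemma crt (K : ℕ) (s : Finset ℂ) (Φ : ℂ → ℂ[X]) :
    ∃ h : ℂ[X], ∀ μ ∈ s, (X - C μ) ^ K ∣ h - Φ μ := by
  classical
  induction s using Finset.induction_on with
  | empty => exact ⟨0, by simp⟩
  | @insert μ s hμs ih =>
      obtain ⟨h', ih⟩ := ih
      set A : ℂ[X] := (X - C μ) ^ K with hA
      set B : ℂ[X] := ∏ μ' ∈ s, (X - C μ') ^ K with hBdef
      have hcop : IsCoprime A B := by
        apply IsCoprime.prod_right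
        intro μ' hμ'
        have hne : μ ≠ μ' := fun h => hμs (h ▸ hμ')
        exact (isCoprime_X_sub_C_of_isUnit_sub (sub_ne_zero.2 hne).isUnit).pow
      obtain ⟨u, v, huv⟩ := hcop
      refine ⟨Φ μ * (v * B) + h' * (u * A), ?_⟩
      intro μ' hμ'
      rcases Finset.mem_insert.1 hμ' with rfl | hμ'
      · have : Φ μ' * (v * B) + h' * (u * A) - Φ μ' = (h' - Φ μ') * (u * A) := by
          linear_combination Φ μ' * huv
        rw [this]
        exact Dvd.dvd.mul_left (dvd_mul_left _ _) _
      · have : Φ μ * (v * B) + h' * (u * A) - Φ μ' =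
            (h' - Φ μ') * (u * A) + (Φ μ - Φ μ') * (v * B) := by
          linear_combination Φ μ' * huv
        rw [this]
        exact dvd_add ((ih μ' hμ').mul_right _)
          (Dvd.dvd.mul_left (Dvd.dvd.mul_left (Finset.dvd_prod_of_mem _ hμ') _) _)

/-- Transfer divisibility from one root to a rotated root. -/
lemma transfer (K m g : ℕ) (lam lam₀ ω : ℂ) (hω : ω * lam = lam₀)
    (hωm : ω ^ m = 1) (hωg : ω ^ g = 1) (ψ : ℂ[X])
    (hdvd : (X - C lam₀) ^ K ∣ (X : ℂ[X]) ^ g - ψ.comp (X ^ m)) :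
    (X - C lam) ^ K ∣ (X : ℂ[X]) ^ g - ψ.comp (X ^ m) := by
  obtain ⟨W, hW⟩ := hdvd
  have hc := congrArg (fun f : ℂ[X] => f.comp (C ω * X)) hW
  simp only [sub_comp, pow_comp, X_comp, mul_comp, C_comp, comp_assoc] at hc
  have e1 : ((C ω : ℂ[X]) * X) ^ g = X ^ g := by
    rw [mul_pow, ← C_pow, hωg, C_1, one_mul]
  have e2 : ((C ω : ℂ[X]) * X) ^ m = X ^ m := by
    rw [mul_pow, ← C_pow, hωm, C_1, one_mul]
  rw [e2] at hc
  have e4 : (C ω * X - C lam₀ : ℂ[X]) = C ω * (X - C lam) := by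
    rw [mul_sub, ← C_mul, hω]
  rw [e4] at hc
  rw [e1] at hc
  refine ⟨C ω ^ K * W.comp (C ω * X), ?_⟩
  rw [hc, mul_pow]
  ring

/-- Main algebraic lemma: `X^g ≡ h(X^m) (mod R)` for suitable `h`. -/
lemma exists_h (R : ℂ[X]) (hRne : R ≠ 0) (h00 : R.coeff 0 ≠ 0) (m g : ℕ) (hm : 0 < m)
    (hrat : ∀ a b : ℂ, a ∈ R.roots → b ∈ R.roots → (a / b) ^ m = 1 → (a / b) ^ g = 1) :
    ∃ h : ℂ[X], R ∣ (X : ℂ[X]) ^ g - h.comp (X ^ m) := by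
  classical
  set K := R.natDegree with hK
  set rts := R.roots.toFinset with hrts
  have hroot0 : ∀ a ∈ rts, a ≠ 0 := by
    intro a ha h0
    have hroot : R.IsRoot a := isRoot_of_mem_roots (Multiset.mem_toFinset.1 ha)
    rw [h0, IsRoot, ← coeff_zero_eq_eval_zero] at hroot
    exact h00 hroot
  have hstep : ∀ μ ∈ rts.image (· ^ m), ∃ ψ : ℂ[X],
      ∀ lam ∈ rts, lam ^ m = μ → (X - C lam) ^ K ∣ (X : ℂ[X]) ^ g - ψ.comp (X ^ m) := by
    intro μ hμ
    obtain ⟨lam₀, hlam₀, hpow⟩ := Finset.mem_image.1 hμ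
    obtain ⟨ψ, hψ⟩ := jet lam₀ (hroot0 _ hlam₀) m hm ((X : ℂ[X]) ^ g) K
    refine ⟨ψ, fun lam hlam hlm => ?_⟩
    have hlamne : lam ≠ 0 := hroot0 _ hlam
    set ω : ℂ := lam₀ / lam with hω
    have hωlam : ω * lam = lam₀ := div_mul_cancel₀ _ hlamne
    have hωm : ω ^ m = 1 := by
      rw [hω, div_pow, hpow, hlm, div_self]
      rw [← hlm]
      exact pow_ne_zero _ hlamne
    have hωg : ω ^ g = 1 :=
      hrat lam₀ lam (Multiset.mem_toFinset.1 hlam₀) (Multiset.mem_toFinset.1 hlam) hωm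
    exact transfer K m g lam lam₀ ω hωlam hωm hωg ψ hψ
  choose! Φ hΦ using hstep
  obtain ⟨h, hcrt⟩ := crt K (rts.image (· ^ m)) Φ
  refine ⟨h, ?_⟩
  have hdiv : ∀ lam ∈ rts, (X - C lam) ^ K ∣ (X : ℂ[X]) ^ g - h.comp (X ^ m) := by
    intro lam hlam
    have hmem : lam ^ m ∈ rts.image (· ^ m) := Finset.mem_image_of_mem _ hlam
    have h1 := hΦ (lam ^ m) hmem lam hlam rfl
    have h2 := hcrt (lam ^ m) hmem
    have h3 : ((X : ℂ[X]) ^ m - C (lam ^ m)) ^ K ∣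
        h.comp (X ^ m) - (Φ (lam ^ m)).comp (X ^ m) := by
      obtain ⟨w, hw⟩ := h2
      refine ⟨w.comp (X ^ m), ?_⟩
      rw [← sub_comp, hw, mul_comp, pow_comp, sub_comp, X_comp, C_comp]
    have h4 : (X - C lam) ^ K ∣ h.comp (X ^ m) - (Φ (lam ^ m)).comp (X ^ m) := by
      refine dvd_trans (pow_dvd_pow_of_dvd ?_ K) h3
      rw [dvd_iff_isRoot]
      simp
    have h5 := dvd_sub h1 h4
    have : (X : ℂ[X]) ^ g - (Φ (lam ^ m)).comp (X ^ m)
        - (h.comp (X ^ m) - (Φ (lam ^ m)).comp (X ^ m))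
        = (X : ℂ[X]) ^ g - h.comp (X ^ m) := by ring
    rwa [this] at h5
  -- assemble
  have hsp : R = C R.leadingCoeff * (Multiset.map (fun a => X - C a) R.roots).prod :=
    (IsAlgClosed.splits R).eq_prod_roots
  have hprod : (Multiset.map (fun a => X - C a) R.roots).prod ∣
      (X : ℂ[X]) ^ g - h.comp (X ^ m) := by
    rw [Finset.prod_multiset_map_count]
    apply Finset.prod_dvd_of_coprime
    · intro a ha b hb hab
      exact (isCoprime_X_sub_C_of_isUnit_sub (sub_ne_zero.2 hab).isUnit).pow
    · intro a ha
      refine dvd_trans (pow_dvd_pow _ ?_) (hdiv a ha)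
      exact le_trans (Multiset.count_le_card _ _) R.card_roots'
  rw [hsp]
  obtain ⟨w, hw⟩ := hprod
  refine ⟨C R.leadingCoeff⁻¹ * w, ?_⟩
  rw [hw]
  have hu : (C R.leadingCoeff : ℂ[X]) * C R.leadingCoeff⁻¹ = 1 := by
    rw [← C_mul, mul_inv_cancel₀ (leadingCoeff_ne_zero.2 hRne), C_1]
  linear_combination (-((Multiset.map (fun a => X - C a) R.roots).prod * w)) * hu


lemma L_finset_sum {ι : Type*} (c : ℕ → ℂ) (s : Finset ι) (F : ι → ℂ[X]) (n : ℕ) :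
    L c (∑ j ∈ s, F j) n = ∑ j ∈ s, L c (F j) n := by
  induction s using Finset.cons_induction with
  | empty => simp [L_zero]
  | cons a s ha ih => rw [Finset.sum_cons, L_add, ih, Finset.sum_cons]

end
end Stmt6

open Filter Stmt6 Polynomial

/-- Let `c : ℕ → ℂ` be the Taylor coefficient sequence at `0` of a
rational function `p / q` with `q(0) ≠ 0` (i.e. `q · ∑ c_n z^n = p` as formal
power series). If the spectrum `{n : c n ≠ 0}` is contained in a set
`Λ ⊆ ℕ` such that for all sufficiently large `s` there is `m ≥ 1` with
`Λ ∩ {n ≡ -s (mod m)} = ∅`, then the rational function is a polynomial, i.e.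
`c n = 0` for all large `n`. -/
theorem stmt_6 (c : ℕ → ℂ) (p q : Polynomial ℂ) (hq0 : q.eval 0 ≠ 0)
    (hrat : ∀ n : ℕ, ∑ k ∈ Finset.range (n + 1), q.coeff k * c (n - k) = p.coeff n)
    (Λ : Set ℕ) (hspec : {n : ℕ | c n ≠ 0} ⊆ Λ)
    (hR : ∃ S : ℕ, ∀ s : ℕ, S ≤ s → 0 < s →
      ∃ m : ℕ, 0 < m ∧ ∀ n ∈ Λ, ¬ ((n : ℤ) ≡ -(s : ℤ) [ZMOD (m : ℤ)])) :
    ∀ᶠ n in atTop, c n = 0 := by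
  classical
  obtain ⟨S, hS⟩ := hR
  set d := q.natDegree with hd
  set N1 := p.natDegree + 1 with hN1
  set R : ℂ[X] := ∑ j ∈ Finset.range (d + 1), Polynomial.monomial j (q.coeff (d - j)) with hRdef
  have hqne : q ≠ 0 := fun h => hq0 (by simp [h])
  have hlc : q.coeff d ≠ 0 := by
    rw [hd, ← Polynomial.leadingCoeff]
    exact Polynomial.leadingCoeff_ne_zero.2 hqne
  have hR0 : R.coeff 0 = q.coeff d := by
    rw [hRdef, Polynomial.finset_sum_coeff]
    simp [Polynomial.coeff_monomial]
  have hRne : R ≠ 0 := by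
    intro h
    rw [h, Polynomial.coeff_zero] at hR0
    exact hlc hR0.symm
  -- the recurrence
  have hrec : ∀ n, N1 ≤ n → L c R n = 0 := by
    intro n hn
    have h1 : L c R n = ∑ j ∈ Finset.range (d + 1), q.coeff (d - j) * c (n + j) := by
      rw [hRdef, L_finset_sum]
      exact Finset.sum_congr rfl fun j _ => L_monomial c j _ n
    have h2 : ∑ j ∈ Finset.range (d + 1), q.coeff (d - j) * c (n + j)
        = ∑ k ∈ Finset.range (d + 1), q.coeff k * c (n + d - k) := by
      rw [← Finset.sum_range_reflect (fun k => q.coeff k * c (n + d - k)) (d + 1)]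
      apply Finset.sum_congr rfl
      intro j hj
      have hj' : j < d + 1 := Finset.mem_range.1 hj
      have e1 : d + 1 - 1 - j = d - j := by omega
      have e2 : n + d - (d - j) = n + j := by omega
      rw [e1, e2]
    have h3 : ∑ k ∈ Finset.range (d + 1), q.coeff k * c (n + d - k)
        = ∑ k ∈ Finset.range (n + d + 1), q.coeff k * c (n + d - k) := by
      apply Finset.sum_subset
      · intro k hk
        rw [Finset.mem_range] at hk ⊢
        omega
      · intro k _ hk
        rw [Finset.mem_range, not_lt] at hk
        rw [Polynomial.coeff_eq_zero_of_natDegree_lt (by omega : q.natDegree < k), zero_mul]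
    have h4 : p.coeff (n + d) = 0 :=
      Polynomial.coeff_eq_zero_of_natDegree_lt (by omega)
    rw [h1, h2, h3, hrat (n + d), h4]
  -- D
  set rts := R.roots.toFinset with hrts
  set D := ∏ pr ∈ rts ×ˢ rts,
      (if orderOf (pr.1 / pr.2) = 0 then 1 else orderOf (pr.1 / pr.2)) with hD
  have hDpos : 0 < D := by
    apply Finset.prod_pos
    intro pr _
    split
    · omega
    · omega
  have key : ∀ v, v < D → ∀ᶠ n in atTop, (n % D = v → c n = 0) := by
    intro v hv
    by_contra hcon
    rw [Filter.not_eventually] at hcon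
    have hcon' : ∃ᶠ n in atTop, n % D = v ∧ c n ≠ 0 :=
      hcon.mono fun n hn => by push_neg at hn; exact hn
    set s := (D - v) + D * (S + 1) with hsdef
    have hDS : S + 1 ≤ D * (S + 1) := Nat.le_mul_of_pos_left _ hDpos
    have hs1 : S ≤ s := by omega
    have hs2 : 0 < s := by omega
    have hvs : v + s = D * (S + 2) := by rw [Nat.mul_succ]; omega
    obtain ⟨m, hm, hmiss⟩ := hS s hs1 hs2
    have hvan : ∀ n : ℕ, m ∣ (n + s) → c n = 0 := by
      intro n hdvd
      by_contra hne
      apply hmiss n (hspec hne)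
      rw [Int.modEq_iff_dvd]
      have h1 : (m : ℤ) ∣ ((n : ℤ) + (s : ℤ)) := by exact_mod_cast hdvd
      have h2 : (-(s : ℤ)) - (n : ℤ) = -((n : ℤ) + (s : ℤ)) := by ring
      rw [h2]
      exact dvd_neg.2 h1
    set g := Nat.gcd m D with hg
    have hgm : g ∣ m := Nat.gcd_dvd_left _ _
    have hgD : g ∣ D := Nat.gcd_dvd_right _ _
    have hratio : ∀ a b : ℂ, a ∈ R.roots → b ∈ R.roots → (a / b) ^ m = 1 → (a / b) ^ g = 1 := by
      intro a b ha hb hab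
      have hfin : IsOfFinOrder (a / b) := isOfFinOrder_iff_pow_eq_one.2 ⟨m, hm, hab⟩
      have h1 : orderOf (a / b) ∣ m := orderOf_dvd_iff_pow_eq_one.2 hab
      have h2 : orderOf (a / b) ∣ D := by
        have hmem : (a, b) ∈ rts ×ˢ rts :=
          Finset.mem_product.2 ⟨Multiset.mem_toFinset.2 ha, Multiset.mem_toFinset.2 hb⟩
        have h3 := Finset.dvd_prod_of_mem
          (fun pr : ℂ × ℂ => if orderOf (pr.1 / pr.2) = 0 then 1 else orderOf (pr.1 / pr.2)) hmem
        have hne0 : orderOf (a / b) ≠ 0 := fun h => (orderOf_eq_zero_iff.1 h) hfin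
        simp only at h3
        rwa [if_neg hne0] at h3
      exact orderOf_dvd_iff_pow_eq_one.1 (Nat.dvd_gcd h1 h2)
    obtain ⟨h, hh⟩ := exists_h R hRne (hR0 ▸ hlc) m g hm hratio
    set n₀ := m * (N1 + s) - s with hn₀def
    have hmge : N1 + s ≤ m * (N1 + s) := Nat.le_mul_of_pos_left _ hm
    have hn₀N1 : N1 ≤ n₀ := by omega
    have hn₀s : n₀ + s = m * (N1 + s) := by omega
    have hmn₀ : m ∣ n₀ + s := ⟨N1 + s, hn₀s⟩
    obtain ⟨n', ⟨hmod, hcne⟩, hge⟩ := (hcon'.and_eventually (eventually_ge_atTop n₀)).exists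
    have hdm : D * (n' / D) + v = n' := by
      have := Nat.div_add_mod n' D
      omega
    have hDn' : D ∣ n' + s := by
      refine ⟨n' / D + (S + 2), ?_⟩
      rw [Nat.mul_add]
      omega
    have hgn' : g ∣ n' + s := dvd_trans hgD hDn'
    have hgn₀ : g ∣ n₀ + s := dvd_trans hgm hmn₀
    have hgsub : g ∣ n' - n₀ := by
      have h5 := Nat.dvd_sub hgn' hgn₀
      rwa [show n' + s - (n₀ + s) = n' - n₀ from by omega] at h5
    set t := (n' - n₀) / g with ht
    have hnt : n₀ + g * t = n' := by
      rw [ht, Nat.mul_div_cancel' hgsub]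
      omega
    have hLX : c n' = L c ((X : ℂ[X]) ^ (g * t)) n₀ := by
      rw [Polynomial.X_pow_eq_monomial, L_monomial, one_mul, hnt]
    have hdvd2 : R ∣ (X : ℂ[X]) ^ (g * t) - (h ^ t).comp (X ^ m) := by
      rw [pow_mul, Polynomial.pow_comp]
      exact dvd_trans hh (sub_dvd_pow_sub_pow _ _ t)
    have hz : L c ((X : ℂ[X]) ^ (g * t) - (h ^ t).comp (X ^ m)) n₀ = 0 :=
      L_dvd c R N1 hrec _ hdvd2 n₀ hn₀N1
    rw [L_sub] at hz
    have hz2 : L c ((h ^ t).comp (X ^ m)) n₀ = 0 := by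
      rw [L_comp, Polynomial.sum_def]
      apply Finset.sum_eq_zero
      intro j _
      rw [hvan (n₀ + m * j) (by
        rw [show n₀ + m * j + s = (n₀ + s) + m * j from by omega]
        exact dvd_add hmn₀ ⟨j, rfl⟩), mul_zero]
    apply hcne
    rw [hLX]
    rw [hz2] at hz
    linear_combination hz
  have hall : ∀ᶠ n in atTop, ∀ v ∈ Finset.range D, (n % D = v → c n = 0) :=
    (Filter.eventually_all_finset _).2 fun v hv => key v (Finset.mem_range.1 hv)
  filter_upwards [hall] with n hn
  exact hn (n % D) (Finset.mem_range.2 (Nat.mod_lt _ hDpos)) rfl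
end
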